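/- Let a, b be nonzero complex numbers and k₀ the quasihyperbolic distance in ℂ \ {0} (so k₀(a,b) = |Log(b/a)|). Then |a - b|/max(|a|,|b|) ≤ k₀(a,b) ≤ (1 + π/2)·|a - b|/min(|a|,|b|). -/

import Mathlib

open Real

/-- `|r - 1| ≤ max 1 r * |log r|` for `r > 0`. -/
lemma aux_abs_sub_one_le (r : ℝ) (hr : 0 < r) : |r - 1| ≤ max 1 r * |Real.log r| := by
  rcases le_or_gt 1 r with h | h
  · have h1 : Real.log r⁻¹ ≤ r⁻¹ - 1 := Real.log_le_sub_one_of_pos (by positivity)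
    rw [Real.log_inv] at h1
    have hlr : 0 ≤ Real.log r := Real.log_nonneg h
    rw [abs_of_nonneg (show (0:ℝ) ≤ r - 1 by linarith), abs_of_nonneg hlr, max_eq_right h]
    have : 1 - 1/r ≤ Real.log r := by
      have : r⁻¹ - 1 ≥ -Real.log r := by linarith
      rw [inv_eq_one_div] at this; linarith
    calc r - 1 = r * (1 - 1/r) := by field_simp
    _ ≤ r * Real.log r := by nlinarith
  · have h1 : Real.log r ≤ r - 1 := Real.log_le_sub_one_of_pos hr
    have hlr : Real.log r ≤ 0 := Real.log_nonpos hr.le h.le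
    rw [abs_of_nonpos (show r - 1 ≤ (0:ℝ) by linarith), abs_of_nonpos hlr, max_eq_left h.le]
    linarith

/-- `min 1 r * |log r| ≤ |r - 1|` for `r > 0`. -/
lemma aux_min_log_le (r : ℝ) (hr : 0 < r) : min 1 r * |Real.log r| ≤ |r - 1| := by
  rcases le_or_gt 1 r with h | h
  · have h1 : Real.log r ≤ r - 1 := Real.log_le_sub_one_of_pos hr
    have hlr : 0 ≤ Real.log r := Real.log_nonneg h
    rw [abs_of_nonneg (show (0:ℝ) ≤ r - 1 by linarith), abs_of_nonneg hlr, min_eq_left h]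
    linarith
  · have h1 : Real.log r⁻¹ ≤ r⁻¹ - 1 := Real.log_le_sub_one_of_pos (by positivity)
    rw [Real.log_inv] at h1
    have hlr : Real.log r ≤ 0 := Real.log_nonpos hr.le h.le
    rw [abs_of_nonpos (show r - 1 ≤ (0:ℝ) by linarith), abs_of_nonpos hlr, min_eq_right h.le]
    have : -Real.log r ≤ (1 - r)/r := by
      rw [inv_eq_one_div] at h1
      have : 1/r - 1 = (1-r)/r := by field_simp
      linarith
    calc r * -Real.log r ≤ r * ((1-r)/r) := by nlinarith
    _ = -(r - 1) := by field_simp; ring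

lemma key_lower (r θ : ℝ) (hr : 0 < r) (hθ : |θ| ≤ π) :
    1 - 2*(r*Real.cos θ) + r^2 ≤ (max 1 r)^2 * ((Real.log r)^2 + θ^2) := by
  have h1 : |r - 1| ≤ max 1 r * |Real.log r| := aux_abs_sub_one_le r hr
  have h2 : 1 - θ^2/2 ≤ Real.cos θ := Real.one_sub_sq_div_two_le_cos
  have hm1 : (1:ℝ) ≤ max 1 r := le_max_left _ _
  have hmr : r ≤ max 1 r := le_max_right _ _
  have h1' := mul_self_le_mul_self (abs_nonneg (r-1)) h1
  rw [abs_mul_abs_self] at h1'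
  have e : (max 1 r * |Real.log r|) * (max 1 r * |Real.log r|)
      = (max 1 r)^2 * (|Real.log r| * |Real.log r|) := by ring
  rw [e, abs_mul_abs_self] at h1'
  -- h1' : (r-1)*(r-1) ≤ (max 1 r)^2 * (log r * log r)
  have hM2 : r ≤ (max 1 r)^2 := by nlinarith
  have h3 : r*θ^2 ≤ (max 1 r)^2 * θ^2 := mul_le_mul_of_nonneg_right hM2 (sq_nonneg θ)
  have h4 : 2*r*(1 - Real.cos θ) ≤ r*θ^2 := by nlinarith
  nlinarith [h1', h3, h4]

lemma key_upper (r θ : ℝ) (hr : 0 < r) (hθ : |θ| ≤ π) :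
    min 1 r * Real.sqrt ((Real.log r)^2 + θ^2) ≤
      (1 + π/2) * Real.sqrt (1 - 2*(r*Real.cos θ) + r^2) := by
  set m := min 1 r with hm
  have hm0 : 0 < m := lt_min one_pos hr
  have hm1 : m ≤ 1 := min_le_left _ _
  have hmr : m ≤ r := min_le_right _ _
  set L := |Real.log r| with hL
  set T := |θ| with hT
  set A2 := 1 - 2*(r*Real.cos θ) + r^2 with hA2
  have hcos1 : Real.cos θ ≤ 1 := Real.cos_le_one θ
  have hA2decomp : A2 = (r-1)^2 + 2*r*(1 - Real.cos θ) := by ring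
  have hA2nn : 0 ≤ A2 := by nlinarith [sq_nonneg (r-1)]
  set A := Real.sqrt A2 with hA
  -- step 1: sqrt(L²+T²) ≤ L + T
  have hs1 : Real.sqrt ((Real.log r)^2 + θ^2) ≤ L + T := by
    rw [← Real.sqrt_sq (by positivity : (0:ℝ) ≤ L + T)]
    apply Real.sqrt_le_sqrt
    have : (Real.log r)^2 = L^2 := (sq_abs _).symm
    have h2 : θ^2 = T^2 := (sq_abs _).symm
    nlinarith [mul_nonneg (abs_nonneg (Real.log r)) (abs_nonneg θ)]
  -- step 2: m * L ≤ A
  have h2 : m * L ≤ A := by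
    have := aux_min_log_le r hr
    have h3 : |r - 1| ≤ A := by
      rw [hA, ← Real.sqrt_sq_eq_abs]
      apply Real.sqrt_le_sqrt
      nlinarith
    linarith
  -- step 3: m * T ≤ (π/2) * A
  have h3 : m * T ≤ (π/2) * A := by
    have hj : Real.cos θ ≤ 1 - 2/π^2 * θ^2 := Real.cos_le_one_sub_mul_cos_sq hθ
    have hπ : 0 < π := Real.pi_pos
    -- (m*T)² ≤ r θ² ≤ (π/2)² * A2
    have hm2 : m^2 ≤ r := by nlinarith
    have hmT2 : (m*T)^2 ≤ r * θ^2 := by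
      have hTθ : T^2 = θ^2 := sq_abs _
      calc (m*T)^2 = m^2 * T^2 := by ring
      _ ≤ r * T^2 := mul_le_mul_of_nonneg_right hm2 (sq_nonneg T)
      _ = r * θ^2 := by rw [hTθ]
    have hrθ : r * θ^2 ≤ (π/2)^2 * A2 := by
      have hj' : π^2 * Real.cos θ ≤ π^2 - 2*θ^2 := by
        have h := mul_le_mul_of_nonneg_left hj (by positivity : (0:ℝ) ≤ π^2)
        have he : π^2 * (1 - 2/π^2 * θ^2) = π^2 - 2*θ^2 := by
          field_simp
        rw [he] at h; exact h
      have h4 : 2*θ^2 ≤ π^2 * (1 - Real.cos θ) := by nlinarith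
      have h5 : r * (2*θ^2) ≤ r * (π^2 * (1 - Real.cos θ)) :=
        mul_le_mul_of_nonneg_left h4 hr.le
      nlinarith [sq_nonneg (r-1), sq_nonneg π, h5]
    have hmTnn : 0 ≤ m * T := by positivity
    have hRnn : 0 ≤ (π/2) * A := by positivity
    rw [← Real.sqrt_sq hmTnn, ← Real.sqrt_sq hRnn]
    apply Real.sqrt_le_sqrt
    have hAsq : A^2 = A2 := Real.sq_sqrt hA2nn
    calc (m*T)^2 ≤ (π/2)^2 * A2 := le_trans hmT2 hrθ
    _ = ((π/2)*A)^2 := by rw [mul_pow, hAsq]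
  calc m * Real.sqrt ((Real.log r)^2 + θ^2) ≤ m * (L + T) := by nlinarith
  _ = m*L + m*T := by ring
  _ ≤ A + (π/2)*A := by linarith
  _ = (1 + π/2) * A := by ring

theorem qh_punctured_plane_euclidean_bounds (a b : ℂ) (ha : a ≠ 0) (hb : b ≠ 0) :
    ‖a - b‖ / max ‖a‖ ‖b‖ ≤
        ‖Complex.log (b / a)‖ ∧
    ‖Complex.log (b / a)‖ ≤
        (1 + Real.pi / 2) *
          (‖a - b‖ / min ‖a‖ ‖b‖) := by
  set z := b / a with hz
  have hz0 : z ≠ 0 := div_ne_zero hb ha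
  set r := ‖z‖ with hr
  have hrpos : 0 < r := norm_pos_iff.mpr hz0
  set θ := Complex.arg z with hθ
  have hθabs : |θ| ≤ π := Complex.abs_arg_le_pi z
  have ha0 : 0 < ‖a‖ := norm_pos_iff.mpr ha
  -- |b| = |a| * r
  have hbr : ‖b‖ = ‖a‖ * r := by
    rw [hr, hz, norm_div]
    field_simp
  -- a - b = a * (1 - z)
  have hab : a - b = a * (1 - z) := by
    rw [hz]; field_simp
  have habs_ab : ‖a - b‖ = ‖a‖ * ‖1 - z‖ := by
    rw [hab, norm_mul]
  -- |log z| = sqrt(log r ^2 + θ^2)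
  have hlog : ‖Complex.log z‖ = Real.sqrt ((Real.log r)^2 + θ^2) := by
    rw [Complex.norm_def, Complex.normSq_apply, Complex.log_re, Complex.log_im,
      ← hr, ← hθ]
    congr 1
    ring
  -- |1 - z| = sqrt(1 - 2 r cos θ + r²)
  have hre : z.re = r * Real.cos θ := by
    rw [hθ, Complex.cos_arg hz0, hr]
    field_simp
  have h1z : ‖1 - z‖ = Real.sqrt (1 - 2*(r*Real.cos θ) + r^2) := by
    rw [Complex.norm_def, Complex.normSq_apply]
    congr 1
    simp only [Complex.sub_re, Complex.sub_im, Complex.one_re, Complex.one_im]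
    have him : z.im * z.im = r^2 - z.re * z.re := by
      have : r^2 = z.re^2 + z.im^2 := by
        rw [hr, Complex.sq_norm, Complex.normSq_apply]; ring
      nlinarith
    rw [hre] at him ⊢
    nlinarith [him]
  have hmax : max ‖a‖ ‖b‖ = ‖a‖ * max 1 r := by
    rw [hbr, mul_max_of_nonneg _ _ ha0.le, mul_one]
  have hmin : min ‖a‖ ‖b‖ = ‖a‖ * min 1 r := by
    rw [hbr, mul_min_of_nonneg _ _ ha0.le, mul_one]
  have hmaxpos : (0:ℝ) < max 1 r := lt_max_of_lt_left one_pos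
  have hminpos : (0:ℝ) < min 1 r := lt_min one_pos hrpos
  constructor
  · rw [habs_ab, hmax, mul_div_mul_left _ _ (ne_of_gt ha0), div_le_iff₀ hmaxpos, hlog, h1z]
    have key := key_lower r θ hrpos hθabs
    calc Real.sqrt (1 - 2*(r*Real.cos θ) + r^2)
        ≤ Real.sqrt ((max 1 r)^2 * ((Real.log r)^2 + θ^2)) := Real.sqrt_le_sqrt key
      _ = Real.sqrt ((Real.log r)^2 + θ^2) * max 1 r := by
          rw [Real.sqrt_mul (by positivity), Real.sqrt_sq hmaxpos.le]; ring
  · rw [habs_ab, hmin, mul_div_mul_left _ _ (ne_of_gt ha0), hlog, h1z,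
      ← mul_div_assoc, le_div_iff₀ hminpos]
    calc Real.sqrt ((Real.log r)^2 + θ^2) * min 1 r
        = min 1 r * Real.sqrt ((Real.log r)^2 + θ^2) := mul_comm _ _
      _ ≤ (1 + π/2) * Real.sqrt (1 - 2*(r*Real.cos θ) + r^2) := key_upper r θ hrpos hθabs
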